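/- For the stationary fluid Tangle model with d types and unit arrival rate, any time-independent solution (x_i, l_i, w_i) of the equations l_i^2 = 2 x_i l_i and l_i - x_i = u_i h with u_i = 2 x_i l_i / (sum_j l_j^2) must have, for each i, either l_i = 0 or l_i = 2h/k where k is the number of nonzero components; in particular the nonzero components satisfy x_i = h/k, w_i = h/k, l_i = 2h/k. -/

import Mathlib

open Finset

/-- Static solutions of the fluid Tangle model: each nonzero component equals 2h/k,
with x_i = h/k and w_i = h/k, where k is the number of nonzero components. -/
theorem fluid_tangle_static_solution
    (d : ℕ) (hd : 1 ≤ d) (h : ℝ) (hh : 0 < h)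
    (x l w : Fin d → ℝ)
    (hl_nonneg : ∀ i, 0 ≤ l i)
    (hl_ne : ∃ i, l i ≠ 0)
    (heq1 : ∀ i, (l i) ^ 2 = 2 * x i * l i)
    (heq2 : ∀ i, l i - x i = h * (2 * x i * l i) / (∑ j, (l j) ^ 2))
    (hw : ∀ i, w i = l i - x i)
    (k : ℕ) (hk : k = (Finset.univ.filter (fun i => l i ≠ 0)).card) :
    ∀ i, l i = 0 ∨ (l i = 2 * h / k ∧ x i = h / k ∧ w i = h / k) := by
  set S : ℝ := ∑ j, (l j) ^ 2 with hS
  obtain ⟨i0, hi0⟩ := hl_ne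
  have hSpos : 0 < S := by
    apply Finset.sum_pos' (fun j _ => sq_nonneg _)
    exact ⟨i0, Finset.mem_univ _, by positivity⟩
  -- for nonzero i, x i = l i / 2 and S = 2 h * l i
  have key : ∀ i, l i ≠ 0 → l i = S / (2 * h) := by
    intro i hi
    have h1 := heq1 i
    have hx : x i = l i / 2 := by
      have : l i * l i = (2 * x i) * l i := by ring_nf; ring_nf at h1; linarith
      field_simp
      nlinarith [mul_right_cancel₀ hi this]
    have h2 := heq2 i
    rw [hx] at h2
    have h2' : l i / 2 * S = h * (2 * (l i / 2) * l i) := by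
      field_simp at h2 ⊢
      nlinarith [h2]
    have : l i * S = l i * (2 * h * l i) := by nlinarith
    have := mul_left_cancel₀ hi this
    field_simp
    linarith
  set c : ℝ := S / (2 * h) with hc
  have hcpos : 0 < c := by positivity
  have hkpos : 0 < k := by
    rw [hk, Finset.card_pos]
    exact ⟨i0, by simp [hi0]⟩
  have hsum : S = k * c ^ 2 := by
    have : S = ∑ j ∈ Finset.univ.filter (fun i => l i ≠ 0), (l j) ^ 2 := by
      rw [hS, Finset.sum_filter]
      apply Finset.sum_congr rfl
      intro j _
      by_cases hj : l j = 0 <;> simp [hj]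
    rw [this, hk]
    rw [Finset.sum_congr rfl (fun j hj => by
      rw [key j (Finset.mem_filter.mp hj).2])]
    simp [mul_comm]
  have hSc : S = 2 * h * c := by
    rw [hc]; field_simp
  have hceq : c = 2 * h / k := by
    have hkR : (0:ℝ) < (k:ℝ) := by exact_mod_cast hkpos
    have : 2 * h * c = k * c ^ 2 := by rw [← hSc, ← hsum]
    have h2 : 2 * h = k * c := by
      have := mul_right_cancel₀ (ne_of_gt hcpos) (by nlinarith : (2 * h) * c = ((k:ℝ) * c) * c)
      exact this
    field_simp [h2]
    linarith
  intro i
  by_cases hi : l i = 0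
  · exact Or.inl hi
  · right
    have hli : l i = 2 * h / k := by rw [key i hi, hceq]
    have hx : x i = l i / 2 := by
      have h1 := heq1 i
      have : l i * l i = (2 * x i) * l i := by ring_nf; ring_nf at h1; linarith
      field_simp
      nlinarith [mul_right_cancel₀ hi this]
    refine ⟨hli, ?_, ?_⟩
    · rw [hx, hli]; ring
    · rw [hw i, hx, hli]; ring
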